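/- Let n be a positive integer, let T > 0 be a real number and let λ be a real number with 0 < λ < T. Let f : ℝ → ℝ be nonnegative and concave on the open interval (0,T). Then ∫_0^λ f(x)^n dx ≥ (λ/T)^{n+1} · ∫_0^T f(x)^n dx. -/

import Mathlib

open MeasureTheory Set

/-- Lemma 4.10: for a nonnegative concave function `f` on `(0,T)` and `0 < λ < T`,
`∫_0^λ f^n ≥ (λ/T)^(n+1) ∫_0^T f^n`. -/
theorem concave_integral_pow_lower_bound
    (n : ℕ) (hn : 0 < n) (T lam : ℝ) (hT : 0 < T) (hlam : 0 < lam) (hlamT : lam < T)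
    (f : ℝ → ℝ) (hconc : ConcaveOn ℝ (Set.Ioo 0 T) f)
    (hnonneg : ∀ x ∈ Set.Ioo 0 T, 0 ≤ f x) :
    (lam / T) ^ (n + 1) * ∫ x in (0:ℝ)..T, f x ^ n ≤ ∫ x in (0:ℝ)..lam, f x ^ n := by
  set s := lam / T with hs
  have hs0 : 0 < s := div_pos hlam hT
  have hs1 : s < 1 := (div_lt_one hT).2 hlamT
  have hsT : s * T = lam := div_mul_cancel₀ lam hT.ne'
  -- key pointwise inequality
  have key : ∀ x ∈ Set.Ioo (0:ℝ) T, s * f x ≤ f (s * x) := by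
    intro x hx
    obtain ⟨hx0, hxT⟩ := hx
    have H : ∀ ε ∈ Set.Ioo (0:ℝ) s, (s - ε) / (1 - ε) * f x ≤ f (s * x) := by
      intro ε hε
      obtain ⟨hε0, hεs⟩ := hε
      set t := (s - ε) / (1 - ε) with ht
      have h1ε : 0 < 1 - ε := by linarith
      have ht0 : 0 < t := div_pos (by linarith) h1ε
      have ht1 : t < 1 := by rw [ht, div_lt_one h1ε]; linarith
      have hmem : ε * x ∈ Set.Ioo (0:ℝ) T := ⟨by positivity, by nlinarith⟩
      have hcomb := hconc.2 ⟨hx0, hxT⟩ hmem ht0.le (by linarith : (0:ℝ) ≤ 1 - t) (by ring)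
      have heq : t • x + (1 - t) • (ε * x) = s * x := by
        rw [smul_eq_mul, smul_eq_mul, ht]
        field_simp
        ring
      rw [heq, smul_eq_mul, smul_eq_mul] at hcomb
      have hfε := hnonneg _ hmem
      nlinarith [mul_nonneg (by linarith : (0:ℝ) ≤ 1 - t) hfε]
    have tend : Filter.Tendsto (fun ε : ℝ => (s - ε) / (1 - ε) * f x)
        (nhdsWithin 0 (Set.Ioi 0)) (nhds (s * f x)) := by
      have h1 : Filter.Tendsto (fun ε : ℝ => (s - ε) / (1 - ε) * f x)
          (nhds 0) (nhds ((s - 0) / (1 - 0) * f x)) := by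
        apply Filter.Tendsto.mul _ tendsto_const_nhds
        exact Filter.Tendsto.div (tendsto_const_nhds.sub Filter.tendsto_id)
          (tendsto_const_nhds.sub Filter.tendsto_id) (by norm_num)
      simpa using h1.mono_left nhdsWithin_le_nhds
    refine le_of_tendsto tend ?_
    filter_upwards [Ioo_mem_nhdsGT_of_mem ⟨le_refl 0, hs0⟩] with ε hε using H ε hε
  -- boundedness of f on (0,T)
  set M := 2 * f (T / 2) with hM
  have hmid : (T / 2 : ℝ) ∈ Set.Ioo (0:ℝ) T := ⟨by linarith, by linarith⟩
  have hbound : ∀ x ∈ Set.Ioo (0:ℝ) T, f x ≤ M := by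
    intro x hx
    obtain ⟨hx0, hxT⟩ := hx
    have hmem : T - x ∈ Set.Ioo (0:ℝ) T := ⟨by linarith, by linarith⟩
    have hcomb := hconc.2 ⟨hx0, hxT⟩ hmem (by norm_num : (0:ℝ) ≤ 1/2)
      (by norm_num : (0:ℝ) ≤ 1/2) (by norm_num)
    have heq : (1/2 : ℝ) • x + (1/2 : ℝ) • (T - x) = T / 2 := by
      rw [smul_eq_mul, smul_eq_mul]; ring
    rw [heq, smul_eq_mul, smul_eq_mul] at hcomb
    have := hnonneg _ hmem
    simp only [hM]
    linarith
  have hMnn : 0 ≤ M := le_trans (hnonneg _ hmid) (by nlinarith [hnonneg _ hmid])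
  have hcont : ContinuousOn f (Set.Ioo 0 T) := hconc.continuousOn isOpen_Ioo
  -- integrability on (0,T)
  have hIoo : IntegrableOn (fun x => f x ^ n) (Set.Ioo 0 T) := by
    refine ⟨((hcont.pow n).aestronglyMeasurable measurableSet_Ioo), ?_⟩
    apply HasFiniteIntegral.restrict_of_bounded (C := M ^ n) measure_Ioo_lt_top
    rw [ae_restrict_iff' measurableSet_Ioo]
    filter_upwards with x hx
    have h0 := hnonneg x hx
    have h1 := hbound x hx
    rw [Real.norm_eq_abs, abs_of_nonneg (by positivity)]
    exact pow_le_pow_left₀ h0 h1 n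
  have hIT : IntervalIntegrable (fun x => f x ^ n) volume 0 T := by
    rw [intervalIntegrable_iff_integrableOn_Ioc_of_le hT.le]
    exact hIoo.congr_set_ae Ioo_ae_eq_Ioc.symm
  have hIlam : IntervalIntegrable (fun x => f x ^ n) volume 0 lam :=
    hIT.mono_set (by
      rw [Set.uIcc_of_le hlam.le, Set.uIcc_of_le hT.le]
      exact Set.Icc_subset_Icc le_rfl hlamT.le)
  have hIcomp : IntervalIntegrable (fun x => f (s * x) ^ n) volume 0 T := by
    have h := hIlam.comp_mul_left (c := s)
    have hls : lam / s = T := by rw [hs]; field_simp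
    simpa [hls] using h
  have hIs : IntervalIntegrable (fun x => (s * f x) ^ n) volume 0 T := by
    simp only [mul_pow]
    exact hIT.const_mul _
  have hae : (fun x => (s * f x) ^ n) ≤ᵐ[volume.restrict (Set.Icc (0:ℝ) T)]
      fun x => f (s * x) ^ n := by
    rw [Filter.EventuallyLE, ae_restrict_iff' measurableSet_Icc]
    have hns : ∀ᵐ x : ℝ ∂volume, x ∉ ({0, T} : Set ℝ) :=
      compl_mem_ae_iff.2 (((Set.finite_singleton T).insert 0).measure_zero _)
    filter_upwards [hns] with x hx hxIcc
    have hxIoo : x ∈ Set.Ioo (0:ℝ) T := by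
      constructor
      · rcases lt_or_eq_of_le hxIcc.1 with h | h
        · exact h
        · exact absurd h.symm (fun he => hx (by simp [he]))
      · rcases lt_or_eq_of_le hxIcc.2 with h | h
        · exact h
        · exact absurd h (fun he => hx (by simp [he]))
    have h0 : 0 ≤ s * f x := mul_nonneg hs0.le (hnonneg x hxIoo)
    exact pow_le_pow_left₀ h0 (key x hxIoo) n
  have hmono : ∫ x in (0:ℝ)..T, (s * f x) ^ n ≤ ∫ x in (0:ℝ)..T, f (s * x) ^ n :=
    intervalIntegral.integral_mono_ae_restrict hT.le hIs hIcomp hae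
  have hsub : ∫ x in (0:ℝ)..T, f (s * x) ^ n = s⁻¹ * ∫ x in (0:ℝ)..lam, f x ^ n := by
    have h := intervalIntegral.integral_comp_mul_left (a := 0) (b := T)
      (fun x => f x ^ n) hs0.ne'
    rw [mul_zero, hsT] at h
    rw [h, smul_eq_mul]
  have hleft : ∫ x in (0:ℝ)..T, (s * f x) ^ n = s ^ n * ∫ x in (0:ℝ)..T, f x ^ n := by
    simp only [mul_pow]
    exact intervalIntegral.integral_const_mul _ _
  rw [hleft, hsub] at hmono
  have : s * (s ^ n * ∫ x in (0:ℝ)..T, f x ^ n)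
      ≤ s * (s⁻¹ * ∫ x in (0:ℝ)..lam, f x ^ n) :=
    mul_le_mul_of_nonneg_left hmono hs0.le
  calc (lam / T) ^ (n + 1) * ∫ x in (0:ℝ)..T, f x ^ n
      = s * (s ^ n * ∫ x in (0:ℝ)..T, f x ^ n) := by rw [← hs]; ring
    _ ≤ s * (s⁻¹ * ∫ x in (0:ℝ)..lam, f x ^ n) := this
    _ = ∫ x in (0:ℝ)..lam, f x ^ n := by field_simp
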